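/- Let s, r be natural numbers with 1 ≤ s ≤ r. The quotient ring 𝔽₂[a,b]/⟨a^(s+1), ∑_{i=0}^{s} a^i b^(r-i)⟩ has dimension r·(s+1) as an 𝔽₂-vector space. -/

import Mathlib

open MvPolynomial Polynomial
set_option maxHeartbeats 1000000
set_option synthInstance.maxHeartbeats 1000000

theorem milnor_cohomology_dimension (s r : ℕ) (hs : 1 ≤ s) (hsr : s ≤ r) :
    Module.finrank (ZMod 2)
      (MvPolynomial (Fin 2) (ZMod 2) ⧸
        Ideal.span {(X 0 : MvPolynomial (Fin 2) (ZMod 2)) ^ (s + 1),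
          ∑ i ∈ Finset.range (s + 1),
            (X 0 : MvPolynomial (Fin 2) (ZMod 2)) ^ i * X 1 ^ (r - i)}) = r * (s + 1) := by
  classical
  let e₀ : MvPolynomial (Fin 1) (ZMod 2) ≃ₐ[ZMod 2] Polynomial (ZMod 2) :=
    (MvPolynomial.finSuccEquiv (ZMod 2) 0).trans
      (Polynomial.mapAlgEquiv (MvPolynomial.isEmptyAlgEquiv (ZMod 2) (Fin 0)))
  let e₁ : MvPolynomial (Fin 2) (ZMod 2) ≃ₐ[ZMod 2] Polynomial (Polynomial (ZMod 2)) :=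
    (MvPolynomial.renameEquiv (ZMod 2) (Equiv.swap 0 1)).trans
      ((MvPolynomial.finSuccEquiv (ZMod 2) 1).trans (Polynomial.mapAlgEquiv e₀))
  have h0 : e₁ (X 0) = Polynomial.C Polynomial.X := by
    show Polynomial.mapAlgEquiv e₀ (MvPolynomial.finSuccEquiv (ZMod 2) 1
      (rename (Equiv.swap 0 1) (X 0))) = _
    rw [rename_X, Equiv.swap_apply_left]
    have : (1 : Fin 2) = Fin.succ 0 := rfl
    rw [this, finSuccEquiv_X_succ]
    simp [e₀, Polynomial.mapAlgEquiv, finSuccEquiv_X_zero]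
  have h1 : e₁ (X 1) = Polynomial.X := by
    show Polynomial.mapAlgEquiv e₀ (MvPolynomial.finSuccEquiv (ZMod 2) 1
      (rename (Equiv.swap 0 1) (X 1))) = _
    rw [rename_X, Equiv.swap_apply_right, finSuccEquiv_X_zero]
    simp [Polynomial.mapAlgEquiv]
  set g₀ : Polynomial (Polynomial (ZMod 2)) :=
    ∑ i ∈ Finset.range (s + 1),
      Polynomial.C (Polynomial.X ^ i) * Polynomial.X ^ (r - i) with hg₀
  set I₀ : Ideal (Polynomial (ZMod 2)) :=
    Ideal.span {Polynomial.X ^ (s + 1)} with hI₀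
  have hmap : Ideal.map (e₁ : MvPolynomial (Fin 2) (ZMod 2) →+* Polynomial (Polynomial (ZMod 2)))
      (Ideal.span {(X 0 : MvPolynomial (Fin 2) (ZMod 2)) ^ (s + 1),
        ∑ i ∈ Finset.range (s + 1),
          (X 0 : MvPolynomial (Fin 2) (ZMod 2)) ^ i * X 1 ^ (r - i)})
      = Ideal.map (Polynomial.C : Polynomial (ZMod 2) →+* Polynomial (Polynomial (ZMod 2))) I₀
          ⊔ Ideal.span {g₀} := by
    have hf : e₁ ((X 0 : MvPolynomial (Fin 2) (ZMod 2)) ^ (s + 1))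
        = Polynomial.C (Polynomial.X ^ (s + 1)) := by
      rw [map_pow, h0, ← Polynomial.C_pow]
    have hg : e₁ (∑ i ∈ Finset.range (s + 1),
        (X 0 : MvPolynomial (Fin 2) (ZMod 2)) ^ i * X 1 ^ (r - i)) = g₀ := by
      rw [map_sum]
      exact Finset.sum_congr rfl fun i _ => by
        rw [map_mul, map_pow, map_pow, h0, h1, ← Polynomial.C_pow]
    rw [Ideal.map_span, Set.image_insert_eq, Set.image_singleton, hI₀, Ideal.map_span,
      Set.image_singleton, ← Ideal.span_insert]
    simp only [RingHom.coe_coe, hf, hg]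
  -- properties of g₀
  have hp : Polynomial.degree ((∑ i ∈ Finset.range s,
      Polynomial.C (Polynomial.X ^ (i + 1)) * Polynomial.X ^ (r - (i + 1))) :
        Polynomial (Polynomial (ZMod 2)))
      < ((r : ℕ) : WithBot ℕ) := by
    refine lt_of_le_of_lt (Polynomial.degree_sum_le _ _) ?_
    refine (Finset.sup_lt_iff (by exact_mod_cast WithBot.bot_lt_coe r)).mpr ?_
    intro i _
    refine lt_of_le_of_lt (Polynomial.degree_mul_le _ _) ?_
    refine lt_of_le_of_lt (add_le_add Polynomial.degree_C_le
      (le_of_eq (Polynomial.degree_X_pow _))) ?_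
    rw [zero_add]
    exact_mod_cast Nat.sub_lt (by omega) (Nat.succ_pos i)
  have hsum : g₀ = Polynomial.X ^ r + ∑ i ∈ Finset.range s,
      Polynomial.C (Polynomial.X ^ (i + 1)) * Polynomial.X ^ (r - (i + 1)) := by
    rw [hg₀, Finset.sum_range_succ']
    simp [add_comm]
  have hmon : g₀.Monic := by rw [hsum]; exact Polynomial.monic_X_pow_add hp
  have hdeg : g₀.natDegree = r := by
    have hdg : g₀.degree = (r : ℕ) := by
      rw [hsum, Polynomial.degree_add_eq_left_of_degree_lt, Polynomial.degree_X_pow]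
      rw [Polynomial.degree_X_pow]; exact hp
    exact Polynomial.natDegree_eq_of_degree_eq_some hdg
  -- the quotient tower
  haveI : Nontrivial (Polynomial (ZMod 2) ⧸ I₀) :=
    AdjoinRoot.nontrivial (Polynomial.X ^ (s + 1) : Polynomial (ZMod 2))
      (by rw [Polynomial.degree_X_pow]; exact_mod_cast (Nat.succ_ne_zero s))
  let g₁ : Polynomial (Polynomial (ZMod 2) ⧸ I₀) := g₀.map (Ideal.Quotient.mk I₀)
  have hmon₁ : g₁.Monic := hmon.map _
  let pbA : PowerBasis (ZMod 2) (Polynomial (ZMod 2) ⧸ I₀) :=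
    AdjoinRoot.powerBasis' (Polynomial.monic_X_pow (s + 1))
  haveI : Module.Free (ZMod 2) (Polynomial (ZMod 2) ⧸ I₀) := Module.Free.of_basis pbA.basis
  have hrA : Module.finrank (ZMod 2) (Polynomial (ZMod 2) ⧸ I₀) = s + 1 := by
    rw [pbA.finrank]
    show (Polynomial.X ^ (s + 1) : Polynomial (ZMod 2)).natDegree = s + 1
    rw [Polynomial.natDegree_X_pow]
  let B := AdjoinRoot g₁
  let pbB : PowerBasis (Polynomial (ZMod 2) ⧸ I₀) B := AdjoinRoot.powerBasis' hmon₁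
  haveI : Module.Free (Polynomial (ZMod 2) ⧸ I₀) B := Module.Free.of_basis pbB.basis
  have hrB : Module.finrank (Polynomial (ZMod 2) ⧸ I₀) B = r := by
    rw [pbB.finrank]
    show g₁.natDegree = r
    rw [hmon.natDegree_map, hdeg]
  -- the chain of equivalences
  let E1 := Ideal.quotientEquivAlg (R₁ := ZMod 2)
    (Ideal.span {(X 0 : MvPolynomial (Fin 2) (ZMod 2)) ^ (s + 1),
      ∑ i ∈ Finset.range (s + 1),
        (X 0 : MvPolynomial (Fin 2) (ZMod 2)) ^ i * X 1 ^ (r - i)})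
    (Ideal.map (Polynomial.C : Polynomial (ZMod 2) →+* Polynomial (Polynomial (ZMod 2))) I₀
      ⊔ Ideal.span {g₀}) e₁ hmap.symm
  let E2 := (DoubleQuot.quotQuotEquivQuotSupₐ (ZMod 2)
    (Ideal.map (Polynomial.C : Polynomial (ZMod 2) →+* Polynomial (Polynomial (ZMod 2))) I₀)
    (Ideal.span {g₀})).symm
  let eq := Ideal.polynomialQuotientEquivQuotientPolynomial I₀
  have hbridge : Ideal.map (Ideal.Quotient.mkₐ (ZMod 2)
        (Ideal.map (Polynomial.C : Polynomial (ZMod 2) →+* Polynomial (Polynomial (ZMod 2))) I₀))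
        (Ideal.span {g₀})
      = Ideal.map (Ideal.Quotient.mk
        (Ideal.map (Polynomial.C : Polynomial (ZMod 2) →+* Polynomial (Polynomial (ZMod 2))) I₀))
        (Ideal.span {g₀}) := rfl
  have hIJ : Ideal.map (Ideal.Quotient.mk
        (Ideal.map (Polynomial.C : Polynomial (ZMod 2) →+* Polynomial (Polynomial (ZMod 2))) I₀))
        (Ideal.span {g₀})
      = Ideal.map (eq : Polynomial (Polynomial (ZMod 2) ⧸ I₀) →+* _) (Ideal.span {g₁}) := by
    have he : eq g₁ = Ideal.Quotient.mk
        (Ideal.map (Polynomial.C : Polynomial (ZMod 2) →+* Polynomial (Polynomial (ZMod 2))) I₀)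
        g₀ := Ideal.polynomialQuotientEquivQuotientPolynomial_map_mk I₀ g₀
    simp only [Ideal.map_span, Set.image_singleton, RingHom.coe_coe, he]
  haveI hts : (Ideal.span {g₁}).IsTwoSided := Ideal.IsTwoSided.mk fun b ha => mul_comm b _ ▸ (Ideal.span {g₁}).smul_mem _ ha
  let E3ring := Ideal.quotientEquiv (Ideal.span {g₁})
    (Ideal.map (Ideal.Quotient.mk
      (Ideal.map (Polynomial.C : Polynomial (ZMod 2) →+* Polynomial (Polynomial (ZMod 2))) I₀))
      (Ideal.span {g₀})) eq hIJ
  let E3 : ((Polynomial (Polynomial (ZMod 2)) ⧸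
        Ideal.map (Polynomial.C : Polynomial (ZMod 2) →+* Polynomial (Polynomial (ZMod 2))) I₀) ⧸
        Ideal.map (Ideal.Quotient.mk
          (Ideal.map (Polynomial.C : Polynomial (ZMod 2) →+* Polynomial (Polynomial (ZMod 2))) I₀))
          (Ideal.span {g₀})) ≃ₐ[ZMod 2] B :=
    AlgEquiv.ofRingEquiv (f := E3ring.symm)
      (fun x => RingHom.congr_fun (RingHom.ext_zmod
        (E3ring.symm.toRingHom.comp (algebraMap (ZMod 2) _)) (algebraMap (ZMod 2) _)) x)
  have hE : Module.finrank (ZMod 2)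
      (MvPolynomial (Fin 2) (ZMod 2) ⧸
        Ideal.span {(X 0 : MvPolynomial (Fin 2) (ZMod 2)) ^ (s + 1),
          ∑ i ∈ Finset.range (s + 1),
            (X 0 : MvPolynomial (Fin 2) (ZMod 2)) ^ i * X 1 ^ (r - i)})
      = Module.finrank (ZMod 2) B :=
    (E1.trans ((E2.trans (Ideal.quotientEquivAlgOfEq (ZMod 2) hbridge)).trans
      E3)).toLinearEquiv.finrank_eq
  rw [hE, ← Module.finrank_mul_finrank (ZMod 2) (Polynomial (ZMod 2) ⧸ I₀) B, hrA, hrB, mul_comm]
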